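/- Let τ ≥ 1 be an integer and let N = ⟨6, 3+6τ, 4+6τ, 7+6τ, 8+6τ⟩ be the additive submonoid of ℕ generated by these five numbers. Then N admits the disjoint decomposition N = 6ℕ ⊔ (3+6τ+6ℕ) ⊔ (4+6τ+6ℕ) ⊔ (7+6τ+6ℕ) ⊔ (8+6τ+6ℕ) ⊔ (11+12τ+6ℕ), where a+6ℕ denotes {a+6k : k ∈ ℕ}. -/

import Mathlib

/-- For `τ ≥ 1`, the submonoid `N = ⟨6, 3+6τ, 4+6τ, 7+6τ, 8+6τ⟩ ⊆ ℕ` admits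
the disjoint decomposition
`N = 6ℕ ⊔ (3+6τ+6ℕ) ⊔ (4+6τ+6ℕ) ⊔ (7+6τ+6ℕ) ⊔ (8+6τ+6ℕ) ⊔ (11+12τ+6ℕ)`. -/
theorem decomposition_family_one (τ : ℕ) (hτ : 1 ≤ τ)
    (f : Fin 6 → Set ℕ)
    (hf : f = ![{x : ℕ | ∃ k : ℕ, x = 6 * k},
                {x : ℕ | ∃ k : ℕ, x = 3 + 6 * τ + 6 * k},
                {x : ℕ | ∃ k : ℕ, x = 4 + 6 * τ + 6 * k},
                {x : ℕ | ∃ k : ℕ, x = 7 + 6 * τ + 6 * k},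
                {x : ℕ | ∃ k : ℕ, x = 8 + 6 * τ + 6 * k},
                {x : ℕ | ∃ k : ℕ, x = 11 + 12 * τ + 6 * k}]) :
    (AddSubmonoid.closure ({6, 3 + 6 * τ, 4 + 6 * τ, 7 + 6 * τ, 8 + 6 * τ} : Set ℕ) : Set ℕ)
        = ⋃ i, f i ∧
      Pairwise (Function.onFun Disjoint f) := by
  subst hf
  constructor
  · ext x
    constructor
    · intro hx
      have hP : x % 6 = 0 ∨ (x % 6 = 3 ∧ 3 + 6 * τ ≤ x) ∨ (x % 6 = 4 ∧ 4 + 6 * τ ≤ x)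
          ∨ (x % 6 = 1 ∧ 7 + 6 * τ ≤ x) ∨ (x % 6 = 2 ∧ 8 + 6 * τ ≤ x)
          ∨ (x % 6 = 5 ∧ 11 + 12 * τ ≤ x) := by
        induction hx using AddSubmonoid.closure_induction with
        | mem y hy => simp only [Set.mem_insert_iff, Set.mem_singleton_iff] at hy; omega
        | zero => omega
        | add a b _ _ ha hb => omega
      rcases hP with h | h | h | h | h | h
      · exact Set.mem_iUnion.2 ⟨0, show ∃ k, x = 6 * k from ⟨x / 6, by omega⟩⟩
      · exact Set.mem_iUnion.2 ⟨1, show ∃ k, x = 3 + 6 * τ + 6 * k from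
          ⟨(x - (3 + 6 * τ)) / 6, by omega⟩⟩
      · exact Set.mem_iUnion.2 ⟨2, show ∃ k, x = 4 + 6 * τ + 6 * k from
          ⟨(x - (4 + 6 * τ)) / 6, by omega⟩⟩
      · exact Set.mem_iUnion.2 ⟨3, show ∃ k, x = 7 + 6 * τ + 6 * k from
          ⟨(x - (7 + 6 * τ)) / 6, by omega⟩⟩
      · exact Set.mem_iUnion.2 ⟨4, show ∃ k, x = 8 + 6 * τ + 6 * k from
          ⟨(x - (8 + 6 * τ)) / 6, by omega⟩⟩
      · exact Set.mem_iUnion.2 ⟨5, show ∃ k, x = 11 + 12 * τ + 6 * k from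
          ⟨(x - (11 + 12 * τ)) / 6, by omega⟩⟩
    · intro hx
      obtain ⟨i, hi⟩ := Set.mem_iUnion.1 hx
      have h6 : (6 : ℕ) ∈ AddSubmonoid.closure
          ({6, 3 + 6 * τ, 4 + 6 * τ, 7 + 6 * τ, 8 + 6 * τ} : Set ℕ) :=
        AddSubmonoid.subset_closure (by simp)
      have h1 : (3 + 6 * τ : ℕ) ∈ AddSubmonoid.closure
          ({6, 3 + 6 * τ, 4 + 6 * τ, 7 + 6 * τ, 8 + 6 * τ} : Set ℕ) :=
        AddSubmonoid.subset_closure (by simp)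
      have h2 : (4 + 6 * τ : ℕ) ∈ AddSubmonoid.closure
          ({6, 3 + 6 * τ, 4 + 6 * τ, 7 + 6 * τ, 8 + 6 * τ} : Set ℕ) :=
        AddSubmonoid.subset_closure (by simp)
      have h3 : (7 + 6 * τ : ℕ) ∈ AddSubmonoid.closure
          ({6, 3 + 6 * τ, 4 + 6 * τ, 7 + 6 * τ, 8 + 6 * τ} : Set ℕ) :=
        AddSubmonoid.subset_closure (by simp)
      have h4 : (8 + 6 * τ : ℕ) ∈ AddSubmonoid.closure
          ({6, 3 + 6 * τ, 4 + 6 * τ, 7 + 6 * τ, 8 + 6 * τ} : Set ℕ) :=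
        AddSubmonoid.subset_closure (by simp)
      have hmul : ∀ k : ℕ, (6 * k : ℕ) ∈ AddSubmonoid.closure
          ({6, 3 + 6 * τ, 4 + 6 * τ, 7 + 6 * τ, 8 + 6 * τ} : Set ℕ) := by
        intro k
        induction k with
        | zero => simpa using AddSubmonoid.zero_mem _
        | succ n ih => rw [mul_add, mul_one]; exact AddSubmonoid.add_mem _ ih h6
      fin_cases i <;> obtain ⟨k, rfl⟩ := hi
      · exact hmul k
      · exact AddSubmonoid.add_mem _ h1 (hmul k)
      · exact AddSubmonoid.add_mem _ h2 (hmul k)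
      · exact AddSubmonoid.add_mem _ h3 (hmul k)
      · exact AddSubmonoid.add_mem _ h4 (hmul k)
      · have := AddSubmonoid.add_mem _ (AddSubmonoid.add_mem _ h1 h4) (hmul k)
        rw [show 11 + 12 * τ + 6 * k = 3 + 6 * τ + (8 + 6 * τ) + 6 * k by ring]; exact this
  · intro i j hij
    rw [Function.onFun, Set.disjoint_left]
    rintro a hai haj
    fin_cases i <;> fin_cases j <;>
      simp_all only [Set.mem_setOf_eq, Matrix.cons_val_zero, Matrix.cons_val_one, Matrix.head_cons,
        Matrix.cons_val_two, Matrix.tail_cons, Matrix.cons_val_three, Matrix.cons_val_four,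
        Matrix.cons_val_succ, ne_eq, not_true_eq_false] <;>
      (obtain ⟨k, rfl⟩ := hai; obtain ⟨l, hl⟩ := haj; omega)
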